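/- Every overlap ambiguity of R with respect to ≤ is of the form (b^{v^δ}_{t,1}, b^v_{1,i}, (v^δ)_{t,n}, (v^δ)_{1,σ(i)}) for some v ∈ V and some (t,i) ∈ {1,…,n}². -/

import Mathlib

/-!
Common setting (from the paper "The Anick resolution of the co-unit of the free unitary
quantum group", arXiv:2403.06663):

`k` is a field and `n ≥ 2`.  `S` is the set of `2n²` generators `u∘_{j,i}, u•_{j,i}`,
`(j,i) ∈ {1,…,n}²`, with the involution `*` exchanging `u∘_{j,i}` and `u•_{j,i}`.
Indices are realized `0`-based as elements of `Fin n` (so the index `1` is `fin1 = 0`,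
the index `n` is `finN = n-1`, and `σ(i) = n-i+1` is `Fin.rev`).
-/

namespace UnPlusAnick

/-- A generator: a color (`false` = white `∘`, `true` = black `•`) and a pair of indices. -/
abbrev Gen (n : ℕ) := Bool × Fin n × Fin n

/-- The involution `*` on the generators: it flips the color and keeps the indices. -/
def genStar {n : ℕ} (g : Gen n) : Gen n := (!g.1, g.2)

/-- An `n × n` matrix with entries in the set of generators. -/
abbrev Mat (n : ℕ) := Fin n → Fin n → Gen n

/-- The fundamental matrix `u`, `u_{j,i} = u∘_{j,i}`. -/
def uMat (n : ℕ) : Mat n := fun j i => (false, j, i)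

/-- The transpose `vᵀ`. -/
def mT {n : ℕ} (v : Mat n) : Mat n := fun j i => v i j

/-- The matrix `v^σ`, `(v^σ)_{j,i} = (v_{σ(j),σ(i)})^*`. -/
def mS {n : ℕ} (v : Mat n) : Mat n := fun j i => genStar (v j.rev i.rev)

/-- The matrix `v^δ`, `(v^δ)_{j,i} = (v_{σ(i),σ(j)})^*`; thus `v^δ = (v^σ)ᵀ`. -/
def mD {n : ℕ} (v : Mat n) : Mat n := fun j i => genStar (v i.rev j.rev)

/-- The set `V = {u, uᵀ, u^σ, u^δ}`. -/
def V (n : ℕ) : Set (Mat n) := {uMat n, mT (uMat n), mS (uMat n), mD (uMat n)}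

/-- The index `1` of `{1, …, n}`, as the `0`-based element `0` of `Fin n`. -/
def fin1 (n : ℕ) (hn : 2 ≤ n) : Fin n := ⟨0, by omega⟩

/-- The index `n` of `{1, …, n}`, as the `0`-based element `n - 1` of `Fin n`. -/
def finN (n : ℕ) (hn : 2 ≤ n) : Fin n := ⟨n - 1, by omega⟩

theorem genStar_genStar {n : ℕ} (g : Gen n) : genStar (genStar g) = g := by simp [genStar]

theorem mS_mS {n : ℕ} (v : Mat n) : mS (mS v) = v := by
  funext j i; simp [mS, genStar_genStar]

theorem mD_mD {n : ℕ} (v : Mat n) : mD (mD v) = v := by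
  funext j i; simp [mD, genStar_genStar]

theorem mS_mD {n : ℕ} (v : Mat n) : mS (mD v) = mT v := by
  funext j i; simp [mS, mD, mT, genStar_genStar]

theorem mD_mS {n : ℕ} (v : Mat n) : mD (mS v) = mT v := by
  funext j i; simp [mS, mD, mT, genStar_genStar]

/-- `V` is closed under transposition. -/
theorem V_mT {n : ℕ} {v : Mat n} (hv : v ∈ V n) : mT v ∈ V n := by
  simp only [V, Set.mem_insert_iff, Set.mem_singleton_iff] at hv ⊢
  rcases hv with rfl | rfl | rfl | rfl
  · exact Or.inr (Or.inl rfl)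
  · exact Or.inl rfl
  · exact Or.inr (Or.inr (Or.inr rfl))
  · exact Or.inr (Or.inr (Or.inl rfl))

/-- `V` is closed under `v ↦ v^σ`. -/
theorem V_mS {n : ℕ} {v : Mat n} (hv : v ∈ V n) : mS v ∈ V n := by
  simp only [V, Set.mem_insert_iff, Set.mem_singleton_iff] at hv ⊢
  rcases hv with rfl | rfl | rfl | rfl
  · exact Or.inr (Or.inr (Or.inl rfl))
  · exact Or.inr (Or.inr (Or.inr rfl))
  · exact Or.inl (mS_mS _)
  · exact Or.inr (Or.inl (mS_mD _))

/-- `V` is closed under `v ↦ v^δ`. -/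
theorem V_mD {n : ℕ} {v : Mat n} (hv : v ∈ V n) : mD v ∈ V n := by
  simp only [V, Set.mem_insert_iff, Set.mem_singleton_iff] at hv ⊢
  rcases hv with rfl | rfl | rfl | rfl
  · exact Or.inr (Or.inr (Or.inr rfl))
  · exact Or.inr (Or.inr (Or.inl rfl))
  · exact Or.inr (Or.inl (mD_mS _))
  · exact Or.inl (mD_mD _)

/-! ### Words and the free algebra -/

/-- Words in the generators: the free monoid over the set of generators. -/
abbrev Word (n : ℕ) := FreeMonoid (Gen n)

/-- The free unital associative `k`-algebra on the generators, realized as the monoid algebra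
of the free monoid of words; its canonical `k`-basis is the set of words. -/
abbrev FreeAlg (k : Type*) [Field k] (n : ℕ) := MonoidAlgebra k (Word n)

/-- A word, viewed as a monomial in the free algebra. -/
noncomputable def wd (k : Type*) [Field k] {n : ℕ} (w : Word n) : FreeAlg k n :=
  MonoidAlgebra.of k (Word n) w

/-- The relation `b^v_{j,i} = ∑_{s=1}^{n} v_{j,σ(s)} (v^δ)_{s,σ(i)} − δ_{j,i} · 1`. -/
noncomputable def brel (k : Type*) [Field k] {n : ℕ} (v : Mat n) (j i : Fin n) : FreeAlg k n :=
  (∑ s : Fin n, wd k (FreeMonoid.of (v j s.rev) * FreeMonoid.of (mD v s i.rev)))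
    - if j = i then 1 else 0

/-- The set of relations `R = {b^v_{j,i} : v ∈ V, (j,i) ∈ {1,…,n}²}`. -/
def rels (k : Type*) [Field k] (n : ℕ) : Set (FreeAlg k n) :=
  {x | ∃ v ∈ V n, ∃ j i : Fin n, x = brel k v j i}

/-- `b̃^v = v_{n,n}(v^δ)_{1,1} − ∑_{s=2}^{n} ∑_{t=1}^{n−1} v_{t,σ(s)}(v^δ)_{s,σ(t)} + (n−2)·1`. -/
noncomputable def btil (k : Type*) [Field k] (n : ℕ) (hn : 2 ≤ n) (v : Mat n) : FreeAlg k n :=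
  wd k (FreeMonoid.of (v (finN n hn) (finN n hn)) * FreeMonoid.of (mD v (fin1 n hn) (fin1 n hn)))
    - (∑ s ∈ Finset.univ.filter (fun s : Fin n => s ≠ fin1 n hn),
        ∑ t ∈ Finset.univ.filter (fun t : Fin n => t ≠ finN n hn),
          wd k (FreeMonoid.of (v t s.rev) * FreeMonoid.of (mD v s t.rev)))
    + ((n - 2 : ℕ) : FreeAlg k n)

/-! ### The monomial order and tips -/

/-- The strict order on the generators: every black generator is smaller than every white one;
`u•_{t,s} < u•_{j,i}` iff `(j,i) <` `(t,s)` lexicographically, and `u∘_{t,s} < u∘_{j,i}` iff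
`(t,s) < (j,i)` lexicographically. -/
def genLT {n : ℕ} (g h : Gen n) : Prop :=
  (g.1 = true ∧ h.1 = false) ∨
    (g.1 = true ∧ h.1 = true ∧ toLex h.2 < toLex g.2) ∨
    (g.1 = false ∧ h.1 = false ∧ toLex g.2 < toLex h.2)

/-- The degreewise lexicographic extension of the order on generators to words:
`w ≤ w'` iff `w = w'`, or `w` is shorter than `w'`, or they have the same length and `w`
precedes `w'` lexicographically letter by letter. -/
def wordLE {n : ℕ} (w w' : Word n) : Prop :=
  w = w' ∨ (FreeMonoid.toList w).length < (FreeMonoid.toList w').length ∨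
    ((FreeMonoid.toList w).length = (FreeMonoid.toList w').length ∧
      List.Lex genLT (FreeMonoid.toList w) (FreeMonoid.toList w'))

/-- `IsTip f t`: the word `t` is the `≤`-largest word occurring with nonzero coefficient in
`f`, i.e. `Tip(f) = t`. -/
def IsTip (k : Type*) [Field k] {n : ℕ} (f : FreeAlg k n) (t : Word n) : Prop :=
  f.coeff t ≠ 0 ∧ ∀ w : Word n, f.coeff w ≠ 0 → wordLE w t

/-- `w` divides `w'` (as words in the free monoid). -/
def WDvd {n : ℕ} (w w' : Word n) : Prop := ∃ w₁ w₂ : Word n, w' = w₁ * w * w₂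

/-! ### The ideal of relations -/

/-- The two-sided ideal `I` of the free algebra generated by the set of relations `R`. -/
noncomputable def idl (k : Type*) [Field k] (n : ℕ) : TwoSidedIdeal (FreeAlg k n) :=
  TwoSidedIdeal.span (rels k n)

/-- The set `Tip(I)` of tips of nonzero elements of `I`. -/
def TipSet (k : Type*) [Field k] (n : ℕ) : Set (Word n) :=
  {w | ∃ f : FreeAlg k n, f ∈ idl k n ∧ f ≠ 0 ∧ IsTip k f w}

/-! ### Reductions and ambiguities -/

/-- `φ` is a one-step reduction by `f`: there are fixed words `w₁`, `w₂` such that `φ` maps the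
word `w₁ Tip(f) w₂` to `w₁ (Tip(f) − c⁻¹ f) w₂`, where `c` is the leading coefficient of `f`,
and fixes every other word. -/
def IsOneStep (k : Type*) [Field k] {n : ℕ} (f : FreeAlg k n)
    (φ : FreeAlg k n →ₗ[k] FreeAlg k n) : Prop :=
  f ≠ 0 ∧ ∃ (w₁ w₂ t : Word n), IsTip k f t ∧
    φ (wd k (w₁ * t * w₂)) = wd k w₁ * (wd k t - (f.coeff t)⁻¹ • f) * wd k w₂ ∧
    ∀ w : Word n, w ≠ w₁ * t * w₂ → φ (wd k w) = wd k w

/-- A reduction by a set `G`: a finite composition of one-step reductions by nonzero elements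
of `G`. -/
inductive IsReduction (k : Type*) [Field k] {n : ℕ} (G : Set (FreeAlg k n)) :
    (FreeAlg k n →ₗ[k] FreeAlg k n) → Prop
  | id : IsReduction k G LinearMap.id
  | comp {φ ψ : FreeAlg k n →ₗ[k] FreeAlg k n} {g : FreeAlg k n} (hg : g ∈ G)
      (hφ : IsOneStep k g φ) (hψ : IsReduction k G ψ) : IsReduction k G (φ ∘ₗ ψ)

/-- `(g, g', w₁, w₂)` is an inclusion ambiguity of `G`. -/
def IsInclusionAmbiguity (k : Type*) [Field k] {n : ℕ} (G : Set (FreeAlg k n))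
    (g g' : FreeAlg k n) (w₁ w₂ : Word n) : Prop :=
  g ∈ G ∧ g' ∈ G ∧ g ≠ 0 ∧ g' ≠ 0 ∧ g ≠ g' ∧
    ∃ t t' : Word n, IsTip k g t ∧ IsTip k g' t' ∧ w₁ * t * w₂ = t'

/-- The inclusion ambiguity `(g, g', w₁, w₂)` of `G` resolves. -/
def InclusionAmbiguityResolves (k : Type*) [Field k] {n : ℕ} (G : Set (FreeAlg k n))
    (g g' : FreeAlg k n) (w₁ w₂ : Word n) : Prop :=
  ∀ t t' : Word n, IsTip k g t → IsTip k g' t' →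
    ∃ φ₁ φ₂ : FreeAlg k n →ₗ[k] FreeAlg k n, IsReduction k G φ₁ ∧ IsReduction k G φ₂ ∧
      φ₁ (wd k t' - (g'.coeff t')⁻¹ • g') = φ₂ (wd k w₁ * (wd k t - (g.coeff t)⁻¹ • g) * wd k w₂)

/-- `(g₁, g₂, w₁, w₂)` is an overlap ambiguity of `G`. -/
def IsOverlapAmbiguity (k : Type*) [Field k] {n : ℕ} (G : Set (FreeAlg k n))
    (g₁ g₂ : FreeAlg k n) (w₁ w₂ : Word n) : Prop :=
  g₁ ∈ G ∧ g₂ ∈ G ∧ g₁ ≠ 0 ∧ g₂ ≠ 0 ∧ ¬(w₁ = 1 ∧ w₂ = 1) ∧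
    ∃ t₁ t₂ : Word n, IsTip k g₁ t₁ ∧ IsTip k g₂ t₂ ∧ t₁ * w₂ = w₁ * t₂ ∧
      ¬WDvd t₂ w₂ ∧ ¬WDvd t₁ w₁

/-- The overlap ambiguity `(g₁, g₂, w₁, w₂)` of `G` resolves. -/
def OverlapAmbiguityResolves (k : Type*) [Field k] {n : ℕ} (G : Set (FreeAlg k n))
    (g₁ g₂ : FreeAlg k n) (w₁ w₂ : Word n) : Prop :=
  ∀ t₁ t₂ : Word n, IsTip k g₁ t₁ → IsTip k g₂ t₂ →
    ∃ φ₁ φ₂ : FreeAlg k n →ₗ[k] FreeAlg k n, IsReduction k G φ₁ ∧ IsReduction k G φ₂ ∧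
      φ₁ ((wd k t₁ - (g₁.coeff t₁)⁻¹ • g₁) * wd k w₂) = φ₂ (wd k w₁ * (wd k t₂ - (g₂.coeff t₂)⁻¹ • g₂))

/-! ### Gröbner bases -/

/-- `G` is a Gröbner basis of the two-sided ideal `J` with respect to the order: `G ⊆ J` and
the tip of every nonzero element of `J` is divisible by the tip of some nonzero element
of `G`. -/
def IsGroebner (k : Type*) [Field k] {n : ℕ} (G : Set (FreeAlg k n))
    (J : TwoSidedIdeal (FreeAlg k n)) : Prop :=
  (∀ g ∈ G, g ∈ J) ∧
    ∀ f : FreeAlg k n, f ∈ J → f ≠ 0 → ∀ t : Word n, IsTip k f t →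
      ∃ g ∈ G, g ≠ 0 ∧ ∃ tg : Word n, IsTip k g tg ∧ WDvd tg t

/-- A minimal Gröbner basis: `0 ∉ G` and the tip of no element of `G` divides the tip of a
different element of `G`. -/
def IsMinimalGroebner (k : Type*) [Field k] {n : ℕ} (G : Set (FreeAlg k n))
    (J : TwoSidedIdeal (FreeAlg k n)) : Prop :=
  IsGroebner k G J ∧ (0 : FreeAlg k n) ∉ G ∧
    ∀ g ∈ G, ∀ g' ∈ G, g ≠ g' → ∀ t t' : Word n, IsTip k g t → IsTip k g' t' → ¬WDvd t t'

/-- A reduced Gröbner basis: minimal, every element has leading coefficient `1`, and the tip of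
no element of `G` divides a word occurring with nonzero coefficient in a different element
of `G`. -/
def IsReducedGroebner (k : Type*) [Field k] {n : ℕ} (G : Set (FreeAlg k n))
    (J : TwoSidedIdeal (FreeAlg k n)) : Prop :=
  IsMinimalGroebner k G J ∧ (∀ g ∈ G, ∀ t : Word n, IsTip k g t → g.coeff t = 1) ∧
    ∀ g ∈ G, ∀ g' ∈ G, g ≠ g' → ∀ t : Word n, IsTip k g t →
      ∀ w : Word n, g'.coeff w ≠ 0 → ¬WDvd t w

/-! ### Monoidal ideals -/

/-- A monoidal ideal of the free monoid of words: a set of words containing all multiples of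
its elements. -/
def IsMonIdeal {n : ℕ} (M : Set (Word n)) : Prop :=
  ∀ w ∈ M, ∀ w₁ w₂ : Word n, w₁ * w * w₂ ∈ M

/-- `N` generates `M` as a monoidal ideal: `M` is the smallest monoidal ideal containing `N`. -/
def GeneratesMonIdeal {n : ℕ} (N M : Set (Word n)) : Prop :=
  IsMonIdeal M ∧ N ⊆ M ∧ ∀ M' : Set (Word n), IsMonIdeal M' → N ⊆ M' → M ⊆ M'

/-! ### Chain words -/

/-- `v^{[ℓ]}`: equal to `v` for odd `ℓ` and to `v^δ` for even `ℓ`. -/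
def pw {n : ℕ} (l : ℕ) (v : Mat n) : Mat n := if l % 2 = 1 then v else mD v

/-- The word `v^{(ℓ)}_{j,i}` (for `ℓ ≥ 1`). -/
def chainWord (n : ℕ) (hn : 2 ≤ n) (v : Mat n) (l : ℕ) (j i : Fin n) : Word n :=
  if l = 1 then FreeMonoid.of (v j i.rev)
  else if l % 2 = 0 then
    FreeMonoid.of (v j (finN n hn)) *
      (FreeMonoid.of (mD v (fin1 n hn) (finN n hn)) *
          FreeMonoid.of (v (fin1 n hn) (finN n hn))) ^ ((l - 2) / 2) *
      FreeMonoid.of (mD v (fin1 n hn) i.rev)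
  else
    FreeMonoid.of (v j (finN n hn)) *
      (FreeMonoid.of (mD v (fin1 n hn) (finN n hn)) *
          FreeMonoid.of (v (fin1 n hn) (finN n hn))) ^ ((l - 3) / 2) *
      FreeMonoid.of (mD v (fin1 n hn) (finN n hn)) * FreeMonoid.of (v (fin1 n hn) i.rev)

/-- The set `C_ℓ = {v^{(ℓ)}_{j,i} : v ∈ V, (j,i) ∈ {1,…,n}²}` of `ℓ`-chains. -/
def Cset (n : ℕ) (hn : 2 ≤ n) (l : ℕ) : Set (Word n) :=
  {w | ∃ v ∈ V n, ∃ j i : Fin n, w = chainWord n hn v l j i}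

/-! ### The quotient algebra `A = F/I`, the counit and the modules of the resolution -/

/-- The relation identifying each element of `R` with `0`; the induced ring congruence realizes
the quotient `A = F/I` by the two-sided ideal `I` generated by `R`. -/
def relR (k : Type*) [Field k] (n : ℕ) : FreeAlg k n → FreeAlg k n → Prop :=
  fun a b => a ∈ rels k n ∧ b = 0

/-- The `k`-algebra `A = F/I`. -/
abbrev Aq (k : Type*) [Field k] (n : ℕ) := RingQuot (relR k n)

/-- The quotient map `F → A = F/I`. -/
noncomputable def pr (k : Type*) [Field k] (n : ℕ) : FreeAlg k n →ₐ[k] Aq k n :=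
  RingQuot.mkAlgHom k (relR k n)

/-- The class `v_{j,i} + I ∈ A` of a generator. -/
noncomputable def gen (k : Type*) [Field k] {n : ℕ} (v : Mat n) (j i : Fin n) : Aq k n :=
  pr k n (wd k (FreeMonoid.of (v j i)))

/-- The ring homomorphism `Aᵐᵒᵖ →+* k` induced by `ε` (using the commutativity of `k`). -/
noncomputable def epsOp (k : Type*) [Field k] (n : ℕ) (ε : Aq k n →ₐ[k] k) :
    (Aq k n)ᵐᵒᵖ →+* k where
  toFun a := ε a.unop
  map_one' := by simp
  map_mul' a b := by simp [mul_comm]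
  map_zero' := by simp
  map_add' a b := by simp

/-- The right `A`-module `k_ε`: the field `k` with the right `A`-action induced by `ε`,
realized as a left module over the opposite algebra `Aᵐᵒᵖ`. -/
def KE (k : Type*) [Field k] (n : ℕ) (_ε : Aq k n →ₐ[k] k) : Type _ := k

instance (k : Type*) [Field k] (n : ℕ) (ε : Aq k n →ₐ[k] k) : AddCommGroup (KE k n ε) :=
  inferInstanceAs (AddCommGroup k)

instance (k : Type*) [Field k] (n : ℕ) (ε : Aq k n →ₐ[k] k) : Module k (KE k n ε) :=
  inferInstanceAs (Module k k)

instance (k : Type*) [Field k] (n : ℕ) (ε : Aq k n →ₐ[k] k) : One (KE k n ε) := ⟨(1 : k)⟩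

noncomputable instance (k : Type*) [Field k] (n : ℕ) (ε : Aq k n →ₐ[k] k) :
    Module ((Aq k n)ᵐᵒᵖ) (KE k n ε) :=
  Module.compHom k (epsOp k n ε)

instance (k : Type*) [Field k] (n : ℕ) (ε : Aq k n →ₐ[k] k) :
    SMulCommClass ((Aq k n)ᵐᵒᵖ) k (KE k n ε) :=
  ⟨fun a c x => by
    show epsOp k n ε a • (c • x) = c • (epsOp k n ε a • x)
    rw [smul_smul, smul_smul, mul_comm]⟩

/-- The free right `A`-module `P_ℓ = kC_ℓ ⊗ₖ A` with basis `C_ℓ` (for `ℓ ≥ 1`), realized as a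
left module over the opposite algebra `Aᵐᵒᵖ`. -/
abbrev Pmod (k : Type*) [Field k] (n : ℕ) (hn : 2 ≤ n) (l : ℕ) :=
  ↥(Cset n hn l) →₀ Aq k n

/-- The element `v^{(ℓ)}_{j,i} ⊗ a` of `P_ℓ`. -/
noncomputable def bas (k : Type*) [Field k] (n : ℕ) (hn : 2 ≤ n) (l : ℕ) (v : Mat n)
    (hv : v ∈ V n) (j i : Fin n) (a : Aq k n) : Pmod k n hn l :=
  Finsupp.single ⟨chainWord n hn v l j i, ⟨v, hv, j, i, rfl⟩⟩ a

/-- Pre-composition with a homomorphism of right `A`-modules, as the `k`-linear map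
`Hom_A(N, k_ε) → Hom_A(M, k_ε)`, `g ↦ g ∘ d`. -/
noncomputable def homMap (k : Type*) [Field k] {n : ℕ} (ε : Aq k n →ₐ[k] k) {M N : Type*}
    [AddCommMonoid M] [AddCommMonoid N] [Module ((Aq k n)ᵐᵒᵖ) M] [Module ((Aq k n)ᵐᵒᵖ) N]
    (d : M →ₗ[(Aq k n)ᵐᵒᵖ] N) :
    (N →ₗ[(Aq k n)ᵐᵒᵖ] KE k n ε) →ₗ[k] (M →ₗ[(Aq k n)ᵐᵒᵖ] KE k n ε) where
  toFun g := g.comp d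
  map_add' _ _ := LinearMap.ext fun _ => rfl
  map_smul' _ _ := LinearMap.ext fun _ => rfl

/-- The right-hand side of the defining formula for `d₂` on the basis element
`v^{(2)}_{j,i} ⊗ 1`. -/
noncomputable def d2RHS (k : Type*) [Field k] (n : ℕ) (hn : 2 ≤ n) (v : Mat n)
    (hv : v ∈ V n) (j i : Fin n) : Pmod k n hn 1 :=
  (∑ s : Fin n, bas k n hn 1 v hv j s (gen k (mD v) s i.rev))
    + bas k n hn 1 (mD v) (V_mD hv) j.rev i 1
    - (if j = finN n hn ∧ i = finN n hn then
        ∑ s ∈ Finset.univ.filter (fun s : Fin n => s ≠ fin1 n hn),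
          ((∑ t : Fin n, bas k n hn 1 v hv t s (gen k (mD v) s t.rev))
            + bas k n hn 1 (mD v) (V_mD hv) s s.rev 1)
      else 0)

/-- The right-hand side of the defining formula for `d_ℓ`, `ℓ ≥ 3`, on the basis element
`v^{(ℓ)}_{j,i} ⊗ 1`. -/
noncomputable def dTail (k : Type*) [Field k] (n : ℕ) (hn : 2 ≤ n) (l : ℕ) (v : Mat n)
    (hv : v ∈ V n) (j i : Fin n) : Pmod k n hn (l - 1) :=
  (∑ s : Fin n, bas k n hn (l - 1) v hv j s (gen k (pw l v) s i.rev))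
    + bas k n hn (l - 1) (mD v) (V_mD hv) j.rev i ((-1 : Aq k n) ^ l)
    + (if j = finN n hn then
        ((bas k n hn (l - 1) (mT v) (V_mT hv) (fin1 n hn) (fin1 n hn)
              (gen k (pw l (mT v)) i.rev (finN n hn))
            + (if l = 3 then
                ∑ s ∈ Finset.univ.filter (fun s : Fin n => s ≠ fin1 n hn ∧ s ≠ finN n hn),
                  bas k n hn (l - 1) (mT v) (V_mT hv) s s (gen k (pw l (mT v)) i.rev (finN n hn))
              else 0))
          - (if i = finN n hn then
              (∑ s : Fin n, bas k n hn (l - 1) (mT v) (V_mT hv) (fin1 n hn) s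
                  (gen k (pw l (mT v)) s (finN n hn)))
                + bas k n hn (l - 1) (mS v) (V_mS hv) (finN n hn) (fin1 n hn) ((-1 : Aq k n) ^ l)
            else 0))
      else 0)
    + (if j = fin1 n hn ∧ i = finN n hn then
        bas k n hn (l - 1) (mS v) (V_mS hv) (fin1 n hn) (fin1 n hn) ((-1 : Aq k n) ^ l)
          + (if l = 3 then
              ∑ s ∈ Finset.univ.filter (fun s : Fin n => s ≠ fin1 n hn ∧ s ≠ finN n hn),
                bas k n hn (l - 1) (mS v) (V_mS hv) s s ((-1 : Aq k n) ^ l)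
            else 0)
      else 0)

/-- The system of identities from STATEMENT 14, for a fixed `v ∈ V`. -/
noncomputable def cond14 (k : Type*) [Field k] {n : ℕ} (hn : 2 ≤ n) (ε : Aq k n →ₐ[k] k)
    (g : Pmod k n hn 1 →ₗ[(Aq k n)ᵐᵒᵖ] KE k n ε) (v : Mat n) (hv : v ∈ V n) : Prop :=
  ∀ j i : Fin n, g (bas k n hn 1 (mS v) (V_mS hv) j i 1) = -g (bas k n hn 1 v hv i j 1)

/-- The system of identities (1)–(4) from STATEMENT 16, for a fixed `v ∈ V`. -/
noncomputable def cond16 (k : Type*) [Field k] {n : ℕ} (hn : 2 ≤ n) (ε : Aq k n →ₐ[k] k)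
    (l : ℕ) (g : Pmod k n hn (l - 1) →ₗ[(Aq k n)ᵐᵒᵖ] KE k n ε) (v : Mat n)
    (hv : v ∈ V n) : Prop :=
  (∀ j i : Fin n, (j, i) ≠ (fin1 n hn, fin1 n hn) →
      g (bas k n hn (l - 1) (mT v) (V_mT hv) j i 1) =
        -(((-1 : k) ^ l) • g (bas k n hn (l - 1) (mS v) (V_mS hv) j.rev i.rev 1))
          - (if j = finN n hn ∧ i = finN n hn then
              g (bas k n hn (l - 1) v hv (fin1 n hn) (fin1 n hn) 1)
                + (if l = 3 then
                    ∑ s ∈ Finset.univ.filter (fun s : Fin n => s ≠ fin1 n hn ∧ s ≠ finN n hn),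
                      g (bas k n hn (l - 1) v hv s s 1)
                  else 0)
            else 0)) ∧
  (∀ j i : Fin n, (j, i) ≠ (fin1 n hn, fin1 n hn) →
      g (bas k n hn (l - 1) (mD v) (V_mD hv) j i 1) =
        -(((-1 : k) ^ l) • g (bas k n hn (l - 1) v hv j.rev i.rev 1))
          - (if j = finN n hn ∧ i = finN n hn then
              g (bas k n hn (l - 1) (mS v) (V_mS hv) (fin1 n hn) (fin1 n hn) 1)
                + (if l = 3 then
                    ∑ s ∈ Finset.univ.filter (fun s : Fin n => s ≠ fin1 n hn ∧ s ≠ finN n hn),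
                      g (bas k n hn (l - 1) (mS v) (V_mS hv) s s 1)
                  else 0)
            else 0)) ∧
  (g (bas k n hn (l - 1) (mD v) (V_mD hv) (fin1 n hn) (fin1 n hn) 1) =
      -(((-1 : k) ^ l) • g (bas k n hn (l - 1) (mT v) (V_mT hv) (fin1 n hn) (fin1 n hn) 1))
        - ((-1 : k) ^ l) • g (bas k n hn (l - 1) v hv (finN n hn) (finN n hn) 1)
        + (if l = 3 then
            ∑ s ∈ Finset.univ.filter (fun s : Fin n => s ≠ fin1 n hn ∧ s ≠ finN n hn),
              g (bas k n hn (l - 1) (mS v) (V_mS hv) s s 1)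
          else 0)) ∧
  (g (bas k n hn (l - 1) (mS v) (V_mS hv) (finN n hn) (finN n hn) 1) =
      -(if l = 3 then
          ∑ s ∈ Finset.univ.filter (fun s : Fin n => s ≠ fin1 n hn ∧ s ≠ finN n hn),
            g (bas k n hn (l - 1) (mS v) (V_mS hv) s s 1)
        else 0)
        + ((-1 : k) ^ l) • (g (bas k n hn (l - 1) v hv (finN n hn) (finN n hn) 1)
            + (if l = 3 then
                ∑ s ∈ Finset.univ.filter (fun s : Fin n => s ≠ fin1 n hn ∧ s ≠ finN n hn),
                  g (bas k n hn (l - 1) v hv s s 1)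
              else 0)))



section Statement4Proof

variable {k : Type*} [Field k] {n : ℕ}

instance : DecidableEq (Word n) := fun a b =>
  decidable_of_iff (FreeMonoid.toList a = FreeMonoid.toList b) FreeMonoid.toList.injective.eq_iff

/-- The `s`-th monomial word appearing in `brel`. -/
def mword (v : Mat n) (j i s : Fin n) : Word n :=
  FreeMonoid.of (v j s.rev) * FreeMonoid.of (mD v s i.rev)

lemma toList_mword (v : Mat n) (j i s : Fin n) :
    FreeMonoid.toList (mword v j i s) = [v j s.rev, mD v s i.rev] := rfl

lemma V_cases {v : Mat n} (hv : v ∈ V n) :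
    v = uMat n ∨ v = mT (uMat n) ∨ v = mS (uMat n) ∨ v = mD (uMat n) := by
  simpa [V, Set.mem_insert_iff, Set.mem_singleton_iff] using hv

lemma entry_inj {v : Mat n} (hv : v ∈ V n) {j i j' i' : Fin n}
    (h : v j i = v j' i') : j = j' ∧ i = i' := by
  rcases V_cases hv with rfl | rfl | rfl | rfl <;>
    simp only [uMat, mT, mS, mD, genStar, Prod.mk.injEq, Fin.rev_inj] at h <;>
    tauto

lemma mword_inj {v : Mat n} (hv : v ∈ V n) {j i s s' : Fin n}
    (h : mword v j i s = mword v j i s') : s = s' := by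
  have h2 := congrArg FreeMonoid.toList h
  rw [toList_mword, toList_mword] at h2
  have := (entry_inj hv (List.head_eq_of_cons_eq h2)).2
  exact Fin.rev_injective this

lemma mword_ne_one (v : Mat n) (j i s : Fin n) : mword v j i s ≠ 1 := by
  intro h
  have := congrArg FreeMonoid.toList h
  rw [toList_mword] at this
  exact List.cons_ne_nil _ _ (this.trans FreeMonoid.toList_one)

lemma brel_apply (v : Mat n) (j i : Fin n) (w : Word n) :
    (brel k v j i).coeff w =
      (∑ s : Fin n, if mword v j i s = w then (1 : k) else 0)
        - if j = i ∧ w = 1 then 1 else 0 := by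
  have h1 : (∑ s : Fin n, wd k (mword v j i s)).coeff w
      = ∑ s : Fin n, if mword v j i s = w then (1 : k) else 0 := by
    rw [MonoidAlgebra.coeff_sum, Finsupp.finset_sum_apply]
    refine Finset.sum_congr rfl fun s _ => ?_
    simp [wd, MonoidAlgebra.of_apply, MonoidAlgebra.coeff_single, Finsupp.single_apply]
  have h2 : ((if j = i then 1 else 0 : FreeAlg k n)).coeff w
      = if j = i ∧ w = 1 then (1 : k) else 0 := by
    by_cases hji : j = i
    · by_cases hw : w = 1
      · rw [if_pos hji, if_pos ⟨hji, hw⟩, hw, MonoidAlgebra.one_def, MonoidAlgebra.coeff_single]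
        exact Finsupp.single_eq_same
      · rw [if_pos hji, if_neg (fun hh => hw hh.2), MonoidAlgebra.one_def,
          MonoidAlgebra.coeff_single, Finsupp.single_apply, if_neg (fun hh => hw hh.symm)]
    · rw [if_neg hji, if_neg (fun hh => hji hh.1)]
      rfl
  have h3 : (brel k v j i).coeff w
      = (∑ s : Fin n, wd k (mword v j i s)).coeff w - ((if j = i then 1 else 0 : FreeAlg k n)).coeff w := by
    rw [brel, MonoidAlgebra.coeff_sub]
    exact Finsupp.sub_apply _ _ _
  rw [h3, h1, h2]

lemma brel_apply_mword {v : Mat n} (hv : v ∈ V n) (j i s₀ : Fin n) :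
    (brel k v j i).coeff (mword v j i s₀) = 1 := by
  rw [brel_apply, if_neg (fun hh => mword_ne_one v j i s₀ hh.2), sub_zero]
  have h : ∀ s : Fin n, (if mword v j i s = mword v j i s₀ then (1 : k) else 0)
      = if s = s₀ then 1 else 0 := by
    intro s
    by_cases h : s = s₀
    · rw [if_pos h, if_pos (by rw [h])]
    · rw [if_neg h, if_neg (fun hh => h (mword_inj hv hh))]
  rw [Finset.sum_congr rfl (fun s _ => h s)]
  simp

lemma brel_support {v : Mat n} {j i : Fin n} {w : Word n}
    (h : (brel k v j i).coeff w ≠ 0) : w = 1 ∨ ∃ s, w = mword v j i s := by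
  by_contra hc
  push_neg at hc
  apply h
  rw [brel_apply, if_neg (fun hh => hc.1 hh.2),
    Finset.sum_eq_zero fun s _ => if_neg (fun hh => hc.2 s hh.symm)]
  simp

lemma rev_fin1 (hn : 2 ≤ n) : (fin1 n hn).rev = finN n hn := by
  apply Fin.ext
  rw [Fin.val_rev]
  show n - (0 + 1) = n - 1
  omega

lemma rev_finN (hn : 2 ≤ n) : (finN n hn).rev = fin1 n hn := by
  apply Fin.ext
  rw [Fin.val_rev]
  show n - ((n - 1) + 1) = 0
  omega

lemma fin1_ne_finN (hn : 2 ≤ n) : fin1 n hn ≠ finN n hn := by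
  intro h
  have := congrArg Fin.val h
  simp only [fin1, finN] at this
  omega

lemma genLT_first (hn : 2 ≤ n) {v : Mat n} (hv : v ∈ V n) (j : Fin n) {s : Fin n}
    (hs : s ≠ fin1 n hn) : genLT (v j s.rev) (v j (fin1 n hn).rev) := by
  have hs0 : 0 < s.val := by
    rcases Nat.eq_zero_or_pos s.val with h0 | h0
    · exact absurd (Fin.ext h0) hs
    · exact h0
  have hrev : s.rev < (fin1 n hn).rev := by
    rw [Fin.lt_def, Fin.val_rev, Fin.val_rev]
    have := s.isLt
    show n - (s.val + 1) < n - (0 + 1)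
    omega
  have hslt : fin1 n hn < s := by
    rw [Fin.lt_def]
    exact hs0
  rcases V_cases hv with rfl | rfl | rfl | rfl
  · refine Or.inr (Or.inr ⟨rfl, rfl, ?_⟩)
    rw [Prod.Lex.lt_iff]
    exact Or.inr ⟨rfl, hrev⟩
  · refine Or.inr (Or.inr ⟨rfl, rfl, ?_⟩)
    rw [Prod.Lex.lt_iff]
    exact Or.inl hrev
  · refine Or.inr (Or.inl ⟨rfl, rfl, ?_⟩)
    rw [Prod.Lex.lt_iff]
    refine Or.inr ⟨rfl, ?_⟩
    show ((fin1 n hn).rev.rev : Fin n) < s.rev.rev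
    rw [Fin.rev_rev, Fin.rev_rev]
    exact hslt
  · refine Or.inr (Or.inl ⟨rfl, rfl, ?_⟩)
    rw [Prod.Lex.lt_iff]
    refine Or.inl ?_
    show ((fin1 n hn).rev.rev : Fin n) < s.rev.rev
    rw [Fin.rev_rev, Fin.rev_rev]
    exact hslt

lemma isTip_brel (hn : 2 ≤ n) {v : Mat n} (hv : v ∈ V n) (j i : Fin n) :
    IsTip k (brel k v j i) (mword v j i (fin1 n hn)) := by
  constructor
  · rw [brel_apply_mword hv]
    exact one_ne_zero
  · intro w hw
    rcases brel_support hw with rfl | ⟨s, rfl⟩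
    · exact Or.inr (Or.inl (by simp [toList_mword, FreeMonoid.toList_one]))
    · by_cases hs : s = fin1 n hn
      · exact Or.inl (by rw [hs])
      · refine Or.inr (Or.inr ⟨by simp [toList_mword], ?_⟩)
        rw [toList_mword, toList_mword]
        exact List.Lex.rel (genLT_first hn hv j hs)

lemma genLT_asymm {g h : Gen n} (h1 : genLT g h) (h2 : genLT h g) : False := by
  rcases h1 with ⟨e1, e2⟩ | ⟨e1, e2, l1⟩ | ⟨e1, e2, l1⟩ <;>
    rcases h2 with ⟨f1, f2⟩ | ⟨f1, f2, l2⟩ | ⟨f1, f2, l2⟩ <;>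
      simp_all <;> exact absurd l2 (lt_asymm l1)

lemma lex_asymm : ∀ {l l' : List (Gen n)},
    List.Lex genLT l l' → List.Lex genLT l' l → False := by
  intro l l' h
  induction h with
  | nil => intro h2; cases h2
  | @cons a l1 l2 h ih =>
    intro h2
    cases h2 with
    | cons h' => exact ih h'
    | rel h' => exact genLT_asymm h' h'
  | @rel a l1 b l2 h =>
    intro h2
    cases h2 with
    | cons h' => exact genLT_asymm h h
    | rel h' => exact genLT_asymm h h'

lemma wordLE_antisymm {w w' : Word n} (h : wordLE w w') (h' : wordLE w' w) : w = w' := by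
  rcases h with rfl | h | ⟨hl, h⟩
  · rfl
  · rcases h' with rfl | h' | ⟨hl', h'⟩
    · rfl
    · omega
    · omega
  · rcases h' with rfl | h' | ⟨hl', h'⟩
    · rfl
    · omega
    · exact absurd h' (fun x => lex_asymm h x)

lemma isTip_unique {f : FreeAlg k n} {t t' : Word n}
    (h : IsTip k f t) (h' : IsTip k f t') : t = t' :=
  wordLE_antisymm (h'.2 t h.1) (h.2 t' h'.1)

lemma key_match (hn : 2 ≤ n) {v₁ v₂ : Mat n} (hv₁ : v₁ ∈ V n) (hv₂ : v₂ ∈ V n)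
    {i₁ j₂ : Fin n} (h : mD v₁ (fin1 n hn) i₁.rev = v₂ j₂ (fin1 n hn).rev) :
    v₁ = mD v₂ ∧ i₁ = fin1 n hn ∧ j₂ = fin1 n hn := by
  have hne : (fin1 n hn).rev ≠ fin1 n hn := by
    rw [rev_fin1 hn]
    exact Ne.symm (fin1_ne_finN hn)
  rcases V_cases hv₁ with rfl | rfl | rfl | rfl <;>
      rcases V_cases hv₂ with rfl | rfl | rfl | rfl <;>
    simp only [uMat, mT, mS, mD, genStar, Prod.mk.injEq, Fin.rev_rev, Bool.not_false,
      Bool.not_true, Fin.rev_inj] at h ⊢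
  · exact Bool.noConfusion h.1
  · exact Bool.noConfusion h.1
  · exact absurd h.2.2 hne
  · exact ⟨by funext a b; simp [mD, mS, mT, uMat, genStar, Fin.rev_rev], h.2.1, h.2.2.symm⟩
  · exact Bool.noConfusion h.1
  · exact Bool.noConfusion h.1
  · exact ⟨by funext a b; simp [mD, mS, mT, uMat, genStar, Fin.rev_rev], h.2.2, h.2.1.symm⟩
  · exact absurd h.2.1 hne
  · exact absurd h.2.2.symm hne
  · exact ⟨by funext a b; simp [mD, mS, mT, uMat, genStar, Fin.rev_rev], h.2.1, h.2.2.symm⟩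
  · exact Bool.noConfusion h.1
  · exact Bool.noConfusion h.1
  · exact ⟨trivial, h.2.2, h.2.1.symm⟩
  · exact absurd h.2.1.symm hne
  · exact Bool.noConfusion h.1
  · exact Bool.noConfusion h.1

end Statement4Proof

theorem statement_4 (k : Type*) [Field k] (n : ℕ) (hn : 2 ≤ n) :
    ∀ (g₁ g₂ : FreeAlg k n) (w₁ w₂ : Word n),
      IsOverlapAmbiguity k (rels k n) g₁ g₂ w₁ w₂ →
      ∃ v ∈ V n, ∃ t i : Fin n,
        g₁ = brel k (mD v) t (fin1 n hn) ∧ g₂ = brel k v (fin1 n hn) i ∧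
          w₁ = FreeMonoid.of (mD v t (finN n hn)) ∧
          w₂ = FreeMonoid.of (mD v (fin1 n hn) i.rev) := by
  rintro g₁ g₂ w₁ w₂ ⟨hg₁, hg₂, hz₁, hz₂, hnt, t₁, t₂, ht₁, ht₂, heq, hnd₂, hnd₁⟩
  obtain ⟨v₁, hv₁, j₁, i₁, rfl⟩ := hg₁
  obtain ⟨v₂, hv₂, j₂, i₂, rfl⟩ := hg₂
  have e₁ : t₁ = mword v₁ j₁ i₁ (fin1 n hn) := isTip_unique ht₁ (isTip_brel hn hv₁ j₁ i₁)
  have e₂ : t₂ = mword v₂ j₂ i₂ (fin1 n hn) := isTip_unique ht₂ (isTip_brel hn hv₂ j₂ i₂)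
  subst e₁ e₂
  have hlist : [v₁ j₁ (fin1 n hn).rev, mD v₁ (fin1 n hn) i₁.rev] ++ FreeMonoid.toList w₂
      = FreeMonoid.toList w₁ ++ [v₂ j₂ (fin1 n hn).rev, mD v₂ (fin1 n hn) i₂.rev] := by
    have := congrArg FreeMonoid.toList heq
    rwa [FreeMonoid.toList_mul, FreeMonoid.toList_mul, toList_mword, toList_mword] at this
  rcases hw1 : FreeMonoid.toList w₁ with _ | ⟨x, _ | ⟨y, rest⟩⟩
  · -- w₁ empty: contradiction with nontriviality
    rw [hw1] at hlist
    simp only [List.nil_append, List.cons_append, List.cons.injEq] at hlist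
    exfalso
    apply hnt
    constructor
    · exact FreeMonoid.toList.injective hw1
    · exact FreeMonoid.toList.injective hlist.2.2
  · -- w₁ of length 1: the overlap case
    rw [hw1] at hlist
    simp only [List.cons_append, List.nil_append, List.cons.injEq] at hlist
    obtain ⟨hx, hmid, hw2⟩ := hlist
    obtain ⟨hv12, hi1, hj2⟩ := key_match hn hv₁ hv₂ hmid
    refine ⟨v₂, hv₂, j₁, i₂, ?_, ?_, ?_, ?_⟩
    · rw [hv12, hi1]
    · rw [hj2]
    · apply FreeMonoid.toList.injective
      rw [hw1, FreeMonoid.toList_of, ← hx, hv12, rev_fin1 hn]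
    · apply FreeMonoid.toList.injective
      rw [FreeMonoid.toList_of, hw2]
  · -- w₁ of length ≥ 2: contradicts ¬ WDvd t₁ w₁
    exfalso
    rw [hw1] at hlist
    simp only [List.cons_append, List.cons.injEq] at hlist
    obtain ⟨hx, hy, -⟩ := hlist
    apply hnd₁
    refine ⟨1, FreeMonoid.ofList rest, ?_⟩
    apply FreeMonoid.toList.injective
    rw [hw1, FreeMonoid.toList_mul, FreeMonoid.toList_mul, FreeMonoid.toList_one,
      toList_mword, FreeMonoid.toList_ofList]
    rw [← hx, ← hy]
    rfl

end UnPlusAnick
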